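/- arXiv:1601.04506 — 2 statements merged into one kernel-verified Lean document; each statement's English description precedes it below -/
import Mathlib

section
/- In the gauge where U is unit timelike, U = e₀, and the 1-form f arises from a conformal geodesic congruence with f_μ = b_μ − Ω^{-1}∇_μΩ, b_μ = −ω∇_V ω ĝ_{μν}V^ν, θ = ω/Ω, and ∇_U θ = θ⟨U,f⟩, one obtains the regularizing relation ∇_μ Ω = −(∇_U Ω + Ω⟨U,f⟩) U_μ − Ω f_μ. -/
/-- the regularizing relation.  Along the flow line x(τ) of the unit
timelike field U = e₀ (with ∇_U of a scalar equal to the τ-derivative), with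
θ = ω/Ω (encoded as ω = θΩ), b_μ = −ω ∇_V ω ĝ_{μν}V^ν where ∇_V = θ⁻¹∇_U and
ĝ_{μν}V^ν = ω⁻¹Ω⁻¹U_μ (hypothesis `hb`), f_μ = b_μ − Ω⁻¹∇_μΩ (hypothesis `hf`),
and ∇_U θ = θ⟨U,f⟩ (hypothesis `hθode`), one obtains
∇_μΩ = −(∇_UΩ + Ω⟨U,f⟩)U_μ − Ω f_μ. -/
theorem stmt3
    (E : Type*) [AddCommGroup E] [Module ℝ E]
    (Ω ω θ : ℝ → ℝ) (τ : ℝ)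
    (hΩd : DifferentiableAt ℝ Ω τ) (hθd : DifferentiableAt ℝ θ τ)
    (hΩpos : ∀ s, 0 < Ω s) (hθpos : ∀ s, 0 < θ s)
    (hω : ∀ s, ω s = θ s * Ω s)
    (U dΩ b f : E → ℝ)  -- the covectors U_μ, ∇_μΩ, b_μ, f_μ at x(τ)
    (Uvec : E)          -- the vector U^μ at x(τ)
    (hb : ∀ X, b X = -(ω τ) * ((θ τ)⁻¹ * deriv ω τ) * ((ω τ)⁻¹ * (Ω τ)⁻¹ * U X))
    (hf : ∀ X, f X = b X - (Ω τ)⁻¹ * dΩ X)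
    (hθode : deriv θ τ = θ τ * f Uvec) :
    ∀ X, dΩ X = -(deriv Ω τ + Ω τ * f Uvec) * U X - Ω τ * f X := by
  intro X
  have hΩ0 : Ω τ ≠ 0 := (hΩpos τ).ne'
  have hθ0 : θ τ ≠ 0 := (hθpos τ).ne'
  have hω0 : ω τ ≠ 0 := by rw [hω τ]; positivity
  have hder : deriv ω τ = deriv θ τ * Ω τ + θ τ * deriv Ω τ := by
    have hωe : ω = fun s => θ s * Ω s := funext hω
    rw [hωe, deriv_fun_mul hθd hΩd]
  have hbX := hb X
  rw [hder, hθode, hω τ] at hbX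
  have hdΩ : dΩ X = Ω τ * (b X - f X) := by
    have := hf X
    field_simp at this ⊢
    linarith [this]
  rw [hdΩ, hbX]
  field_simp
  ring
end

section
/- Let F_{jkl} be a tensor in a 4-dimensional Lorentzian space with F_{jkl} = −F_{jlk}, F_{[jkl]} = 0, and F^j{}_{jl} = 0, and let U be a unit timelike vector with spatial projector h^j_k = g^j_k + U^jU_k. Define P_a = F_{0a0}, Q_b = −½ F_{0cd} ε_b{}^{cd}, P_{ab} = −F_{(a|0|b)}, Q_{ab} = −½ F_{(a}{}^{cd} ε_{b)cd} (in a frame with e₀ = U). If P_{ab} = 0 and Q_{ab} = 0, then F_{jkl} = 3 U_j P_{[k} U_{l]} − g_{j[k} P_{l]} + Q_i (U_j ε^i{}_{kl} − ε^i{}_{j[k} U_{l]}). -/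
/-- The Levi-Civita symbol ε_{ijkl} on Fin 4 with ε_{0123} = 1. -/
noncomputable def eps4 (i j k l : Fin 4) : ℝ :=
  Matrix.det (Matrix.of ![Pi.single i (1:ℝ), Pi.single j 1, Pi.single k 1, Pi.single l 1])


set_option maxHeartbeats 2000000 in
lemma eps4_0 (b c d : Fin 4) : eps4 0 b c d =
    if b=1∧c=2∧d=3 ∨ b=2∧c=3∧d=1 ∨ b=3∧c=1∧d=2 then 1
    else if b=1∧c=3∧d=2 ∨ b=3∧c=2∧d=1 ∨ b=2∧c=1∧d=3 then -1 else 0 := by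
  have h3 : ((3:Fin 4):ℕ) = 3 := rfl
  fin_cases b <;> fin_cases c <;> fin_cases d <;>
    simp [eps4, Matrix.det_succ_row_zero, Fin.sum_univ_succ, Pi.single_apply, Fin.succAbove]

set_option maxHeartbeats 4000000 in
/-- in a frame with e₀ = U (so U^j = δ^j₀, U_j = −δ_{j0}, encoded by
`Uc`), let F_{jkl} be antisymmetric in its last two indices, with F_{[jkl]} = 0 and
F^j{}_{jl} = 0.  The spatial volume form is ε_{bcd} = ε_{0bcd} (eps4 0 b c d).
Set P_a = F_{0a0}, Q_b = −½F_{0cd}ε_b{}^{cd}; if the symmetrized evolution parts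
P_{ab} = −F_{(a|0|b)} and Q_{ab} = −½F_{(a}{}^{cd}ε_{b)cd} vanish, then
F_{jkl} = 3U_jP_{[k}U_{l]} − g_{j[k}P_{l]} + Q_i(U_jε^i{}_{kl} − ε^i{}_{j[k}U_{l]}). -/
theorem stmt16 (eta : Fin 4 → ℝ) (heta : eta = fun i => if i = 0 then -1 else 1)
    (etam : Fin 4 → Fin 4 → ℝ) (hetam : ∀ i j, etam i j = if i = j then eta i else 0)
    (Uc : Fin 4 → ℝ) (hUc : Uc = fun j => if j = 0 then -1 else 0)
    (F : Fin 4 → Fin 4 → Fin 4 → ℝ)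
    (hanti : ∀ j k l, F j k l = -F j l k)
    (hcyc : ∀ j k l, F j k l + F k l j + F l j k = 0)
    (htrace : ∀ l, ∑ j, eta j * F j j l = 0)
    (P Q : Fin 4 → ℝ)
    (hP : ∀ a, P a = F 0 a 0)
    (hQ : ∀ b, Q b = -(1/2) * ∑ c, ∑ d, F 0 c d * eps4 0 b c d)
    (hPab : ∀ a b, a ≠ 0 → b ≠ 0 → F a 0 b + F b 0 a = 0)
    (hQab : ∀ a b, a ≠ 0 → b ≠ 0 →
      (∑ c, ∑ d, F a c d * eps4 0 b c d) + (∑ c, ∑ d, F b c d * eps4 0 a c d) = 0) :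
    ∀ j k l, F j k l
      = (3/2) * Uc j * (P k * Uc l - P l * Uc k)
        - (1/2) * (etam j k * P l - etam j l * P k)
        + ∑ i, Q i * (Uc j * eps4 0 i k l
            - (1/2) * (eps4 0 i j k * Uc l - eps4 0 i j l * Uc k)) := by
  subst heta hUc
  have h3 : ((3:Fin 4):ℕ) = 3 := rfl
  have h2 : ((2:Fin 4):ℕ) = 2 := rfl
  have g2 : (⟨2, by norm_num⟩ : Fin 4) = (2 : Fin 4) := rfl
  have g3 : (⟨3, by norm_num⟩ : Fin 4) = (3 : Fin 4) := rfl
  have hp0 : P 0 = 0 := by rw [hP]; linarith [hanti 0 0 0]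
  have hq0 : Q 0 = 0 := by
    have h := hQ 0; norm_num [Fin.sum_univ_four, eps4_0, Fin.ext_iff, h2, h3] at h; linarith
  have f023 : F 0 2 3 = -Q 1 := by
    have h := hQ 1; norm_num [Fin.sum_univ_four, eps4_0, Fin.ext_iff, h2, h3] at h
    linarith [hanti 0 2 3, hanti 0 3 2]
  have f031 : F 0 3 1 = -Q 2 := by
    have h := hQ 2; norm_num [Fin.sum_univ_four, eps4_0, Fin.ext_iff, h2, h3] at h
    linarith [hanti 0 3 1, hanti 0 1 3]
  have f012 : F 0 1 2 = -Q 3 := by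
    have h := hQ 3; norm_num [Fin.sum_univ_four, eps4_0, Fin.ext_iff, h2, h3] at h
    linarith [hanti 0 1 2, hanti 0 2 1]
  have f102 : F 1 0 2 = -(1/2) * Q 3 := by
    linarith [hcyc 1 0 2, hanti 0 2 1, hanti 2 1 0, hPab 1 2 (by decide) (by decide), f012]
  have f203 : F 2 0 3 = -(1/2) * Q 1 := by
    linarith [hcyc 2 0 3, hanti 0 3 2, hanti 3 2 0, hPab 2 3 (by decide) (by decide), f023]
  have f301 : F 3 0 1 = -(1/2) * Q 2 := by
    linarith [hcyc 3 0 1, hanti 0 1 3, hanti 1 3 0, hPab 3 1 (by decide) (by decide), f031]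
  have ht1 := htrace 1
  have ht2 := htrace 2
  have ht3 := htrace 3
  norm_num [Fin.sum_univ_four, Fin.ext_iff, h2, h3, -Fin.val_eq_zero_iff] at ht1 ht2 ht3
  have q11 := hQab 1 1 (by decide) (by decide)
  have q22 := hQab 2 2 (by decide) (by decide)
  have q33 := hQab 3 3 (by decide) (by decide)
  have q12 := hQab 1 2 (by decide) (by decide)
  have q13 := hQab 1 3 (by decide) (by decide)
  have q23 := hQab 2 3 (by decide) (by decide)
  norm_num [Fin.sum_univ_four, eps4_0, Fin.ext_iff, h2, h3] at q11 q22 q33 q12 q13 q23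
  have f123 : F 1 2 3 = 0 := by linarith [hanti 1 2 1, hanti 1 3 1, hanti 1 2 3, hanti 2 1 2, hanti 2 3 2, hanti 2 1 3, hanti 3 1 3, hanti 3 2 3, hanti 3 1 2, hanti 1 1 2, hanti 1 1 3, hanti 2 2 1, hanti 2 2 3, hanti 3 3 1, hanti 3 3 2, hanti 0 0 1, hanti 0 0 2, hanti 0 0 3, hanti 1 1 1, hanti 2 2 2, hanti 3 3 3, hanti 2 3 1, hanti 3 2 1, hanti 1 3 2, hP 1, hP 2, hP 3]
  have f231 : F 2 3 1 = 0 := by linarith [hanti 1 2 1, hanti 1 3 1, hanti 1 2 3, hanti 2 1 2, hanti 2 3 2, hanti 2 1 3, hanti 3 1 3, hanti 3 2 3, hanti 3 1 2, hanti 1 1 2, hanti 1 1 3, hanti 2 2 1, hanti 2 2 3, hanti 3 3 1, hanti 3 3 2, hanti 0 0 1, hanti 0 0 2, hanti 0 0 3, hanti 1 1 1, hanti 2 2 2, hanti 3 3 3, hanti 2 3 1, hanti 3 2 1, hanti 1 3 2, hP 1, hP 2, hP 3]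
  have f312 : F 3 1 2 = 0 := by linarith [hanti 1 2 1, hanti 1 3 1, hanti 1 2 3, hanti 2 1 2, hanti 2 3 2, hanti 2 1 3, hanti 3 1 3, hanti 3 2 3, hanti 3 1 2, hanti 1 1 2, hanti 1 1 3, hanti 2 2 1, hanti 2 2 3, hanti 3 3 1, hanti 3 3 2, hanti 0 0 1, hanti 0 0 2, hanti 0 0 3, hanti 1 1 1, hanti 2 2 2, hanti 3 3 3, hanti 2 3 1, hanti 3 2 1, hanti 1 3 2, hP 1, hP 2, hP 3]
  have f112 : F 1 1 2 = -(1/2) * P 2 := by linarith [hanti 1 2 1, hanti 1 3 1, hanti 1 2 3, hanti 2 1 2, hanti 2 3 2, hanti 2 1 3, hanti 3 1 3, hanti 3 2 3, hanti 3 1 2, hanti 1 1 2, hanti 1 1 3, hanti 2 2 1, hanti 2 2 3, hanti 3 3 1, hanti 3 3 2, hanti 0 0 1, hanti 0 0 2, hanti 0 0 3, hanti 1 1 1, hanti 2 2 2, hanti 3 3 3, hanti 2 3 1, hanti 3 2 1, hanti 1 3 2, hP 1, hP 2, hP 3]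
  have f113 : F 1 1 3 = -(1/2) * P 3 := by linarith [hanti 1 2 1, hanti 1 3 1, hanti 1 2 3, hanti 2 1 2, hanti 2 3 2, hanti 2 1 3, hanti 3 1 3, hanti 3 2 3, hanti 3 1 2, hanti 1 1 2, hanti 1 1 3, hanti 2 2 1, hanti 2 2 3, hanti 3 3 1, hanti 3 3 2, hanti 0 0 1, hanti 0 0 2, hanti 0 0 3, hanti 1 1 1, hanti 2 2 2, hanti 3 3 3, hanti 2 3 1, hanti 3 2 1, hanti 1 3 2, hP 1, hP 2, hP 3]
  have f212 : F 2 1 2 = (1/2) * P 1 := by linarith [hanti 1 2 1, hanti 1 3 1, hanti 1 2 3, hanti 2 1 2, hanti 2 3 2, hanti 2 1 3, hanti 3 1 3, hanti 3 2 3, hanti 3 1 2, hanti 1 1 2, hanti 1 1 3, hanti 2 2 1, hanti 2 2 3, hanti 3 3 1, hanti 3 3 2, hanti 0 0 1, hanti 0 0 2, hanti 0 0 3, hanti 1 1 1, hanti 2 2 2, hanti 3 3 3, hanti 2 3 1, hanti 3 2 1, hanti 1 3 2, hP 1, hP 2, hP 3]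
  have f223 : F 2 2 3 = -(1/2) * P 3 := by linarith [hanti 1 2 1, hanti 1 3 1, hanti 1 2 3, hanti 2 1 2, hanti 2 3 2, hanti 2 1 3, hanti 3 1 3, hanti 3 2 3, hanti 3 1 2, hanti 1 1 2, hanti 1 1 3, hanti 2 2 1, hanti 2 2 3, hanti 3 3 1, hanti 3 3 2, hanti 0 0 1, hanti 0 0 2, hanti 0 0 3, hanti 1 1 1, hanti 2 2 2, hanti 3 3 3, hanti 2 3 1, hanti 3 2 1, hanti 1 3 2, hP 1, hP 2, hP 3]
  have f313 : F 3 1 3 = (1/2) * P 1 := by linarith [hanti 1 2 1, hanti 1 3 1, hanti 1 2 3, hanti 2 1 2, hanti 2 3 2, hanti 2 1 3, hanti 3 1 3, hanti 3 2 3, hanti 3 1 2, hanti 1 1 2, hanti 1 1 3, hanti 2 2 1, hanti 2 2 3, hanti 3 3 1, hanti 3 3 2, hanti 0 0 1, hanti 0 0 2, hanti 0 0 3, hanti 1 1 1, hanti 2 2 2, hanti 3 3 3, hanti 2 3 1, hanti 3 2 1, hanti 1 3 2, hP 1, hP 2, hP 3]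
  have f323 : F 3 2 3 = (1/2) * P 2 := by linarith [hanti 1 2 1, hanti 1 3 1, hanti 1 2 3, hanti 2 1 2, hanti 2 3 2, hanti 2 1 3, hanti 3 1 3, hanti 3 2 3, hanti 3 1 2, hanti 1 1 2, hanti 1 1 3, hanti 2 2 1, hanti 2 2 3, hanti 3 3 1, hanti 3 3 2, hanti 0 0 1, hanti 0 0 2, hanti 0 0 3, hanti 1 1 1, hanti 2 2 2, hanti 3 3 3, hanti 2 3 1, hanti 3 2 1, hanti 1 3 2, hP 1, hP 2, hP 3]
  intro j k l
  fin_cases j <;> fin_cases k <;> fin_cases l <;>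
    norm_num [Fin.sum_univ_four, eps4_0, hetam, Fin.ext_iff, h2, h3, g2, g3] <;>
    linarith [hanti 0 0 0, hanti 0 0 1, hanti 0 0 2, hanti 0 0 3, hanti 0 1 0, hanti 0 1 1, hanti 0 1 2, hanti 0 1 3, hanti 0 2 0, hanti 0 2 1, hanti 0 2 2, hanti 0 2 3, hanti 0 3 0, hanti 0 3 1, hanti 0 3 2, hanti 0 3 3, hanti 1 0 0, hanti 1 0 1, hanti 1 0 2, hanti 1 0 3, hanti 1 1 0, hanti 1 1 1, hanti 1 1 2, hanti 1 1 3, hanti 1 2 0, hanti 1 2 1, hanti 1 2 2, hanti 1 2 3, hanti 1 3 0, hanti 1 3 1, hanti 1 3 2, hanti 1 3 3, hanti 2 0 0, hanti 2 0 1, hanti 2 0 2, hanti 2 0 3, hanti 2 1 0, hanti 2 1 1, hanti 2 1 2, hanti 2 1 3, hanti 2 2 0, hanti 2 2 1, hanti 2 2 2, hanti 2 2 3, hanti 2 3 0, hanti 2 3 1, hanti 2 3 2, hanti 2 3 3, hanti 3 0 0, hanti 3 0 1, hanti 3 0 2, hanti 3 0 3, hanti 3 1 0, hanti 3 1 1,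 hanti 3 1 2, hanti 3 1 3, hanti 3 2 0, hanti 3 2 1, hanti 3 2 2, hanti 3 2 3, hanti 3 3 0, hanti 3 3 1, hanti 3 3 2, hanti 3 3 3, hPab 1 1 (by decide) (by decide), hPab 1 2 (by decide) (by decide), hPab 1 3 (by decide) (by decide), hPab 2 1 (by decide) (by decide), hPab 2 2 (by decide) (by decide), hPab 2 3 (by decide) (by decide), hPab 3 1 (by decide) (by decide), hPab 3 2 (by decide) (by decide), hPab 3 3 (by decide) (by decide), hP 0, hP 1, hP 2, hP 3]
end
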